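/- arXiv:1902.05027 — 4 statements merged into one kernel-verified Lean document; each statement's English description precedes it below -/
import Mathlib

section
/- Let ψ : ℝ → ℝ^d and ψ' : ℝ → ℝ^d be such that ψ' is integrable and square-integrable on the closed interval [α, β] and ψ(y) − ψ(x) = ∫_x^y ψ'(s) ds for all α ≤ x ≤ y ≤ β. Define u = sqrt( (β − α) · ∫_{[α,β]} ‖ψ'(s)‖² ds ). Then the image ψ([α, β]) is contained in the set U = { x ∈ ℝ^d : ‖ψ(α) − x‖ + ‖x − ψ(β)‖ ≤ u }. -/
open MeasureTheory Set

-- sqrt CS combination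
lemma sqrt_add_sqrt_le (a b A B : ℝ) (ha : 0 ≤ a) (hb : 0 ≤ b) (hA : 0 ≤ A) (hB : 0 ≤ B) :
    Real.sqrt (a * A) + Real.sqrt (b * B) ≤ Real.sqrt ((a + b) * (A + B)) := by
  have h1 := Real.sq_sqrt (mul_nonneg ha hA)
  have h2 := Real.sq_sqrt (mul_nonneg hb hB)
  have h3 := Real.sqrt_nonneg (a * A)
  have h4 := Real.sqrt_nonneg (b * B)
  have h5 : Real.sqrt (a * A) * Real.sqrt (b * B) = Real.sqrt (a * A * (b * B)) :=
    (Real.sqrt_mul (mul_nonneg ha hA) _).symm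
  have h6 : Real.sqrt (a * A * (b * B)) ≤ (a * B + b * A) / 2 := by
    rw [show a * A * (b * B) = a * B * (b * A) by ring]
    calc Real.sqrt (a * B * (b * A)) ≤ Real.sqrt (((a * B + b * A) / 2) ^ 2) :=
          Real.sqrt_le_sqrt (by nlinarith [sq_nonneg (a * B - b * A)])
      _ = (a * B + b * A) / 2 := Real.sqrt_sq (by positivity)
  have hlhs : Real.sqrt (a * A) + Real.sqrt (b * B) =
      Real.sqrt ((Real.sqrt (a * A) + Real.sqrt (b * B)) ^ 2) :=
    (Real.sqrt_sq (by positivity)).symm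
  rw [hlhs]
  apply Real.sqrt_le_sqrt
  nlinarith [h6, h5]

-- Cauchy-Schwarz step on an interval
lemma integral_norm_le_sqrt (d : ℕ) (g : ℝ → EuclideanSpace ℝ (Fin d)) (x y : ℝ) (hxy : x ≤ y)
    (hm : AEStronglyMeasurable g (volume.restrict (Icc x y)))
    (h2 : IntegrableOn (fun s => ‖g s‖ ^ 2) (Icc x y)) :
    ∫ s in Icc x y, ‖g s‖ ≤ Real.sqrt ((y - x) * ∫ s in Icc x y, ‖g s‖ ^ 2) := by
  haveI : IsFiniteMeasure (volume.restrict (Icc x y)) :=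
    ⟨by rw [Measure.restrict_apply_univ, Real.volume_Icc]; exact ENNReal.ofReal_lt_top⟩
  have hpq : Real.HolderConjugate 2 2 := Real.HolderConjugate.two_two
  have hfmem : MemLp (fun s => ‖g s‖) (ENNReal.ofReal 2) (volume.restrict (Icc x y)) := by
    rw [show ENNReal.ofReal 2 = 2 by simp]
    exact ((memLp_two_iff_integrable_sq_norm hm).mpr h2).norm
  have hgmem : MemLp (fun _ : ℝ => (1:ℝ)) (ENNReal.ofReal 2) (volume.restrict (Icc x y)) :=
    memLp_const 1
  have := integral_mul_le_Lp_mul_Lq_of_nonneg hpq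
    (f := fun s => ‖g s‖) (g := fun _ => (1:ℝ))
    (Filter.Eventually.of_forall fun s => norm_nonneg _)
    (Filter.Eventually.of_forall fun s => zero_le_one) hfmem hgmem
  simp only [mul_one] at this
  have hrw : ∀ s : ℝ, ‖g s‖ ^ (2:ℝ) = ‖g s‖ ^ 2 := fun s => Real.rpow_two _
  rw [show (fun s => ‖g s‖ ^ (2:ℝ)) = fun s => ‖g s‖ ^ 2 by ext s; exact Real.rpow_two _] at this
  simp only [Real.one_rpow, integral_const, Measure.restrict_apply_univ, Real.volume_Icc,
    smul_eq_mul, mul_one] at this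
  rw [measureReal_restrict_apply_univ, Real.volume_real_Icc_of_le hxy] at this
  calc ∫ s in Icc x y, ‖g s‖ ≤ (∫ s in Icc x y, ‖g s‖ ^ 2) ^ (1/(2:ℝ)) * (y - x) ^ (1/(2:ℝ)) := this
    _ = Real.sqrt ((y - x) * ∫ s in Icc x y, ‖g s‖ ^ 2) := by
        rw [← Real.sqrt_eq_rpow, ← Real.sqrt_eq_rpow, ← Real.sqrt_mul
          (integral_nonneg fun s => sq_nonneg _), mul_comm]

theorem curve_subset_convex_hull (d : ℕ)
    (ψ ψ' : ℝ → EuclideanSpace ℝ (Fin d)) (α β : ℝ) (hαβ : α ≤ β)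
    (hint : IntegrableOn ψ' (Icc α β))
    (hint2 : IntegrableOn (fun s => ‖ψ' s‖ ^ 2) (Icc α β))
    (hftc : ∀ x y, α ≤ x → x ≤ y → y ≤ β → ψ y - ψ x = ∫ s in x..y, ψ' s) :
    ψ '' (Icc α β) ⊆
      {x : EuclideanSpace ℝ (Fin d) |
        ‖ψ α - x‖ + ‖x - ψ β‖ ≤
          Real.sqrt ((β - α) * ∫ s in Icc α β, ‖ψ' s‖ ^ 2)} := by
  rintro _ ⟨t, ⟨ht1, ht2⟩, rfl⟩
  have key : ∀ x y, α ≤ x → x ≤ y → y ≤ β →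
      ‖ψ y - ψ x‖ ≤ Real.sqrt ((y - x) * ∫ s in Icc x y, ‖ψ' s‖ ^ 2) := by
    intro x y hx hxy hy
    have hsub : Icc x y ⊆ Icc α β := Icc_subset_Icc hx hy
    rw [hftc x y hx hxy hy]
    calc ‖∫ s in x..y, ψ' s‖ ≤ ∫ s in x..y, ‖ψ' s‖ :=
          intervalIntegral.norm_integral_le_integral_norm hxy
      _ = ∫ s in Icc x y, ‖ψ' s‖ := by
          rw [intervalIntegral.integral_of_le hxy, ← integral_Icc_eq_integral_Ioc]
      _ ≤ _ := integral_norm_le_sqrt d ψ' x y hxy (hint.mono_set hsub).1 (hint2.mono_set hsub)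
  have h1 := key α t le_rfl ht1 ht2
  have h2 := key t β ht1 ht2 le_rfl
  have hi1 : IntervalIntegrable (fun s => ‖ψ' s‖ ^ 2) volume α t := by
    rw [intervalIntegrable_iff_integrableOn_Icc_of_le ht1]
    exact hint2.mono_set (Icc_subset_Icc le_rfl ht2)
  have hi2 : IntervalIntegrable (fun s => ‖ψ' s‖ ^ 2) volume t β := by
    rw [intervalIntegrable_iff_integrableOn_Icc_of_le ht2]
    exact hint2.mono_set (Icc_subset_Icc ht1 le_rfl)
  have hsplit : (∫ s in Icc α t, ‖ψ' s‖ ^ 2) + (∫ s in Icc t β, ‖ψ' s‖ ^ 2)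
      = ∫ s in Icc α β, ‖ψ' s‖ ^ 2 := by
    rw [integral_Icc_eq_integral_Ioc, integral_Icc_eq_integral_Ioc, integral_Icc_eq_integral_Ioc,
      ← intervalIntegral.integral_of_le ht1, ← intervalIntegral.integral_of_le ht2,
      ← intervalIntegral.integral_of_le hαβ]
    exact intervalIntegral.integral_add_adjacent_intervals hi1 hi2
  have hA : 0 ≤ ∫ s in Icc α t, ‖ψ' s‖ ^ 2 := integral_nonneg fun s => sq_nonneg _
  have hB : 0 ≤ ∫ s in Icc t β, ‖ψ' s‖ ^ 2 := integral_nonneg fun s => sq_nonneg _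
  have hcs := sqrt_add_sqrt_le (t - α) (β - t) _ _ (by linarith) (by linarith) hA hB
  rw [hsplit, show t - α + (β - t) = β - α by ring] at hcs
  calc ‖ψ α - ψ t‖ + ‖ψ t - ψ β‖
      = ‖ψ t - ψ α‖ + ‖ψ β - ψ t‖ := by rw [norm_sub_rev (ψ α) (ψ t), norm_sub_rev (ψ t) (ψ β)]
    _ ≤ Real.sqrt ((t - α) * ∫ s in Icc α t, ‖ψ' s‖ ^ 2)
        + Real.sqrt ((β - t) * ∫ s in Icc t β, ‖ψ' s‖ ^ 2) := add_le_add h1 h2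
    _ ≤ _ := hcs
end

section
/- Let B ⊆ ℝ^d be a nonempty compact set, let p, q ∈ ℝ^d, let u ≥ 0, and let U = { x ∈ ℝ^d : ‖p − x‖ + ‖x − q‖ ≤ u }. Let x' ∈ U be any point of U. Then inf{ ‖x' − b‖ : b ∈ B } − inf{ ‖x − b‖ : x ∈ U, b ∈ B } ≤ u. -/
theorem dub_sub_dlb_le_u (d : ℕ) (B : Set (EuclideanSpace ℝ (Fin d)))
    (hB : IsCompact B) (hBne : B.Nonempty)
    (p q : EuclideanSpace ℝ (Fin d)) (u : ℝ) (hu : 0 ≤ u)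
    (x' : EuclideanSpace ℝ (Fin d)) (hx' : ‖p - x'‖ + ‖x' - q‖ ≤ u) :
    sInf {r : ℝ | ∃ c ∈ B, r = ‖x' - c‖} -
      sInf {r : ℝ | ∃ x ∈ {y : EuclideanSpace ℝ (Fin d) | ‖p - y‖ + ‖y - q‖ ≤ u},
        ∃ c ∈ B, r = ‖x - c‖} ≤ u := by
  set S1 : Set ℝ := {r : ℝ | ∃ c ∈ B, r = ‖x' - c‖} with hS1
  set S2 : Set ℝ := {r : ℝ | ∃ x ∈ {y : EuclideanSpace ℝ (Fin d) | ‖p - y‖ + ‖y - q‖ ≤ u},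
        ∃ c ∈ B, r = ‖x - c‖} with hS2
  have hS2ne : S2.Nonempty := by
    obtain ⟨b, hb⟩ := hBne
    exact ⟨‖x' - b‖, x', hx', b, hb, rfl⟩
  have key : ∀ r ∈ S2, sInf S1 - u ≤ r := by
    rintro r ⟨x, hx, b, hb, rfl⟩
    have h1 : sInf S1 ≤ ‖x' - b‖ := by
      apply csInf_le
      · exact ⟨0, by rintro r ⟨c, hc, rfl⟩; positivity⟩
      · exact ⟨b, hb, rfl⟩
    have hxx : ‖x' - x‖ ≤ u := by
      have a1 : ‖x' - x‖ ≤ ‖x' - p‖ + ‖p - x‖ := norm_sub_le_norm_sub_add_norm_sub _ _ _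
      have a2 : ‖x' - x‖ ≤ ‖x' - q‖ + ‖q - x‖ := norm_sub_le_norm_sub_add_norm_sub _ _ _
      have e1 : ‖x' - p‖ = ‖p - x'‖ := norm_sub_rev _ _
      have e2 : ‖q - x‖ = ‖x - q‖ := norm_sub_rev _ _
      have hx2 : ‖p - x‖ + ‖x - q‖ ≤ u := hx
      linarith
    have h2 : ‖x' - b‖ ≤ ‖x' - x‖ + ‖x - b‖ := norm_sub_le_norm_sub_add_norm_sub _ _ _
    linarith
  have := le_csInf hS2ne key
  linarith
end

section
/- Let ψ : ℝ → ℝ^d and ψ' : ℝ → ℝ^d be such that ψ' is integrable and square-integrable on a compact interval I = [a, b] and ψ(y) − ψ(x) = ∫_x^y ψ'(s) ds for all a ≤ x ≤ y ≤ b. Let B ⊆ ℝ^d be a nonempty compact set. For a closed sub-interval Q = [α, β] ⊆ I, let u_ψ(Q) = sqrt( (β − α) ∫_Q ‖ψ'(s)‖² ds ), let U_Q = { x : ‖ψ(α) − x‖ + ‖x − ψ(β)‖ ≤ u_ψ(Q) }, let d_lb(Q) = inf{ ‖x − b‖ : x ∈ U_Q, b ∈ B }, and let d_ub(Q) = inf{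 ‖ψ((α+β)/2) − b‖ : b ∈ B }. Then for every ε > 0 there exists δ > 0 such that for every closed sub-interval Q = [α, β] ⊆ I with β − α < δ, one has d_ub(Q) − d_lb(Q) < ε. -/
open MeasureTheory Set

-- Cauchy–Schwarz: L¹ norm bounded by sqrt(length * L² norm squared)
lemma cs_aux {d : ℕ} (ψ' : ℝ → EuclideanSpace ℝ (Fin d)) {α β : ℝ} (hαβ : α ≤ β)
    (h1 : IntegrableOn ψ' (Icc α β))
    (h2 : IntegrableOn (fun s => ‖ψ' s‖ ^ 2) (Icc α β)) :
    (∫ s in Icc α β, ‖ψ' s‖) ≤ Real.sqrt ((β - α) * ∫ s in Icc α β, ‖ψ' s‖ ^ 2) := by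
  set μ := volume.restrict (Icc α β) with hμ
  haveI : IsFiniteMeasure μ := by
    constructor
    rw [hμ, Measure.restrict_apply_univ, Real.volume_Icc]
    exact ENNReal.ofReal_lt_top
  have hconj : Real.HolderConjugate 2 2 := Real.HolderConjugate.two_two
  have hmem : MemLp (fun s => ‖ψ' s‖) (ENNReal.ofReal 2) μ := by
    rw [show ENNReal.ofReal 2 = 2 by simp]
    exact ((memLp_two_iff_integrable_sq_norm h1.aestronglyMeasurable).2 h2).norm
  have hmem1 : MemLp (fun _ : ℝ => (1 : ℝ)) (ENNReal.ofReal 2) μ := memLp_const 1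
  have := integral_mul_le_Lp_mul_Lq_of_nonneg hconj
    (f := fun s => ‖ψ' s‖) (g := fun _ => 1) (μ := μ)
    (Filter.Eventually.of_forall fun s => norm_nonneg _)
    (Filter.Eventually.of_forall fun s => zero_le_one) hmem hmem1
  simp only [mul_one, Real.one_rpow] at this
  have h1int : ∫ _, (1 : ℝ) ∂μ = β - α := by
    simp [hμ, Real.volume_Icc, ENNReal.toReal_ofReal (sub_nonneg.2 hαβ), hαβ]
  rw [h1int] at this
  have hrw : ∀ s, ‖ψ' s‖ ^ (2:ℝ) = ‖ψ' s‖ ^ 2 := fun s => by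
    rw [← Real.rpow_natCast ‖ψ' s‖ 2]; norm_num
  simp only [hrw] at this
  calc ∫ s, ‖ψ' s‖ ∂μ ≤ (∫ s, ‖ψ' s‖ ^ 2 ∂μ) ^ (1/2 : ℝ) * (β - α) ^ (1/2 : ℝ) := this
    _ = Real.sqrt ((β - α) * ∫ s, ‖ψ' s‖ ^ 2 ∂μ) := by
        rw [Real.sqrt_eq_rpow, mul_comm (β - α),
          Real.mul_rpow (integral_nonneg fun s => sq_nonneg _) (sub_nonneg.2 hαβ)]

theorem uniform_convergence (d : ℕ)
    (ψ ψ' : ℝ → EuclideanSpace ℝ (Fin d)) (a b : ℝ) (hab : a ≤ b)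
    (hint : IntegrableOn ψ' (Icc a b))
    (hint2 : IntegrableOn (fun s => ‖ψ' s‖ ^ 2) (Icc a b))
    (hftc : ∀ x y, a ≤ x → x ≤ y → y ≤ b → ψ y - ψ x = ∫ s in x..y, ψ' s)
    (B : Set (EuclideanSpace ℝ (Fin d))) (hB : IsCompact B) (hBne : B.Nonempty) :
    ∀ ε > 0, ∃ δ > 0, ∀ α β : ℝ, α ≤ β → a ≤ α → β ≤ b → β - α < δ →
      sInf {r : ℝ | ∃ c ∈ B, r = ‖ψ ((α + β) / 2) - c‖} -
        sInf {r : ℝ | ∃ x ∈ {y : EuclideanSpace ℝ (Fin d) |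
            ‖ψ α - y‖ + ‖y - ψ β‖ ≤
              Real.sqrt ((β - α) * ∫ s in Icc α β, ‖ψ' s‖ ^ 2)},
          ∃ c ∈ B, r = ‖x - c‖} < ε := by
  intro ε hε
  set C : ℝ := ∫ s in Icc a b, ‖ψ' s‖ ^ 2 with hC
  have hC0 : 0 ≤ C := integral_nonneg fun s => sq_nonneg _
  refine ⟨(ε / 2) ^ 2 / (C + 1), by positivity, fun α β hαβ haα hβb hlt => ?_⟩
  have hsub : Icc α β ⊆ Icc a b := Icc_subset_Icc haα hβb
  have h1 : IntegrableOn ψ' (Icc α β) := hint.mono_set hsub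
  have h2 : IntegrableOn (fun s => ‖ψ' s‖ ^ 2) (Icc α β) := hint2.mono_set hsub
  set u : ℝ := Real.sqrt ((β - α) * ∫ s in Icc α β, ‖ψ' s‖ ^ 2) with hu
  -- u < ε/2
  have hQC : (∫ s in Icc α β, ‖ψ' s‖ ^ 2) ≤ C :=
    setIntegral_mono_set hint2 (Filter.Eventually.of_forall fun s => sq_nonneg _)
      (HasSubset.Subset.eventuallyLE hsub)
  have huε : u < ε / 2 := by
    rw [hu, show ε / 2 = Real.sqrt ((ε/2)^2) from (Real.sqrt_sq (by positivity)).symm]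
    apply Real.sqrt_lt_sqrt
    · exact mul_nonneg (sub_nonneg.2 hαβ) (integral_nonneg fun s => sq_nonneg _)
    · calc (β - α) * ∫ s in Icc α β, ‖ψ' s‖ ^ 2
          ≤ (β - α) * (C + 1) := by
            exact mul_le_mul_of_nonneg_left (hQC.trans (by linarith)) (sub_nonneg.2 hαβ)
        _ < ((ε/2)^2 / (C + 1)) * (C + 1) := by
            apply mul_lt_mul_of_pos_right hlt; linarith
        _ = (ε/2)^2 := by field_simp
  set m : ℝ := (α + β) / 2 with hm
  have hαm : α ≤ m := by rw [hm]; linarith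
  have hmβ : m ≤ β := by rw [hm]; linarith
  -- interval integrability of the norm
  have hii : ∀ x y, α ≤ x → x ≤ y → y ≤ β →
      IntervalIntegrable (fun s => ‖ψ' s‖) volume x y := fun x y hx hxy hy =>
    IntegrableOn.intervalIntegrable (MeasureTheory.IntegrableOn.mono_set h1.norm
      (by rw [uIcc_of_le hxy]; exact Icc_subset_Icc hx hy))
  -- ψ m is in U
  have hdist : ∀ x y, α ≤ x → x ≤ y → y ≤ β → ‖ψ y - ψ x‖ ≤ ∫ s in x..y, ‖ψ' s‖ := by
    intro x y hx hxy hy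
    rw [hftc x y (haα.trans hx) hxy (hy.trans hβb)]
    exact intervalIntegral.norm_integral_le_integral_norm hxy
  have hsum : (∫ s in α..m, ‖ψ' s‖) + ∫ s in m..β, ‖ψ' s‖ = ∫ s in Icc α β, ‖ψ' s‖ := by
    rw [intervalIntegral.integral_add_adjacent_intervals (hii α m le_rfl hαm hmβ)
      (hii m β hαm hmβ le_rfl), intervalIntegral.integral_of_le hαβ,
      ← integral_Icc_eq_integral_Ioc]
  have hψm : ‖ψ α - ψ m‖ + ‖ψ m - ψ β‖ ≤ u := by
    have h1' : ‖ψ α - ψ m‖ ≤ ∫ s in α..m, ‖ψ' s‖ := by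
      rw [← norm_neg, neg_sub]; exact hdist α m le_rfl hαm hmβ
    have h2' : ‖ψ m - ψ β‖ ≤ ∫ s in m..β, ‖ψ' s‖ := by
      rw [← norm_neg, neg_sub]; exact hdist m β hαm hmβ le_rfl
    calc ‖ψ α - ψ m‖ + ‖ψ m - ψ β‖ ≤ ∫ s in Icc α β, ‖ψ' s‖ := by
          rw [← hsum]; exact add_le_add h1' h2'
      _ ≤ u := cs_aux ψ' hαβ h1 h2
  -- inf set manipulations
  obtain ⟨c₀, hc₀⟩ := hBne
  set Sub : Set ℝ := {r : ℝ | ∃ c ∈ B, r = ‖ψ m - c‖} with hSub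
  set Slb : Set ℝ := {r : ℝ | ∃ x ∈ {y : EuclideanSpace ℝ (Fin d) |
      ‖ψ α - y‖ + ‖y - ψ β‖ ≤ u}, ∃ c ∈ B, r = ‖x - c‖} with hSlb
  have hSubne : Sub.Nonempty := ⟨‖ψ m - c₀‖, c₀, hc₀, rfl⟩
  have hSubbdd : BddBelow Sub := ⟨0, fun r ⟨c, _, hr⟩ => hr ▸ norm_nonneg _⟩
  have hSlbne : Slb.Nonempty := ⟨‖ψ m - c₀‖, ψ m, hψm, c₀, hc₀, rfl⟩
  have hlow : ∀ r ∈ Slb, sInf Sub - 2 * u ≤ r := by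
    rintro r ⟨x, hx, c, hc, rfl⟩
    have hxU : ‖ψ α - x‖ + ‖x - ψ β‖ ≤ u := hx
    have h3 : ‖ψ m - x‖ ≤ 2 * u := by
      calc ‖ψ m - x‖ ≤ ‖ψ m - ψ α‖ + ‖ψ α - x‖ := norm_sub_le_norm_sub_add_norm_sub _ _ _
        _ ≤ u + u := add_le_add
            (by rw [← norm_neg, neg_sub]
                calc ‖ψ α - ψ m‖ ≤ ‖ψ α - ψ m‖ + ‖ψ m - ψ β‖ :=
                      le_add_of_nonneg_right (norm_nonneg _)
                  _ ≤ u := hψm)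
            (le_trans (le_add_of_nonneg_right (norm_nonneg _)) hxU)
        _ = 2 * u := by ring
    have h4 : sInf Sub ≤ ‖ψ m - c‖ := csInf_le hSubbdd ⟨c, hc, rfl⟩
    have h5 : ‖ψ m - c‖ ≤ ‖ψ m - x‖ + ‖x - c‖ := norm_sub_le_norm_sub_add_norm_sub _ _ _
    linarith
  have hfin : sInf Sub - 2 * u ≤ sInf Slb := le_csInf hSlbne hlow
  have : sInf Sub - sInf Slb ≤ 2 * u := by linarith
  linarith
end

section
/- Let ψ : ℝ → ℝ^d and ψ' : ℝ → ℝ^d be such that ψ' is integrable and square-integrable on a compact interval I = [a, b] and ψ(y) − ψ(x) = ∫_x^y ψ'(s) ds for all a ≤ x ≤ y ≤ b. Let B ⊆ ℝ^d be a nonempty compact set. For a closed sub-interval Q = [α, β] ⊆ I, let u_ψ(Q) = sqrt( (β − α) ∫_Q ‖ψ'(s)‖² ds ), let U_Q = { x : ‖ψ(α) − x‖ + ‖x − ψ(β)‖ ≤ u_ψ(Q) }, let d_lb(Q) = inf{ ‖x − b‖ : x ∈ U_Q, b ∈ B }, let d_ub(Q) = inf{ ‖ψ((α+β)/2) − b‖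 : b ∈ B }, and let k = ∫_I ‖ψ'(s)‖² ds. Then d_ub(Q) − d_lb(Q) ≤ sqrt( (β − α) · k ). -/
open MeasureTheory Set
open scoped ENNReal

lemma cs_interval (f : ℝ → ℝ) (x y : ℝ) (hxy : x ≤ y)
    (hnn : ∀ s, 0 ≤ f s)
    (hm : AEStronglyMeasurable f (volume.restrict (Icc x y)))
    (h2 : IntegrableOn (fun s => f s ^ 2) (Icc x y)) :
    ∫ s in Icc x y, f s ≤ Real.sqrt ((y - x) * ∫ s in Icc x y, f s ^ 2) := by
  have hpq : Real.HolderConjugate 2 2 := ⟨by norm_num, by norm_num, by norm_num⟩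
  have hf1 : MemLp (fun _ : ℝ => (1:ℝ)) (ENNReal.ofReal 2) (volume.restrict (Icc x y)) :=
    memLp_const 1
  have hg : MemLp f (ENNReal.ofReal 2) (volume.restrict (Icc x y)) := by
    have h22 : ENNReal.ofReal 2 = (2 : ℝ≥0∞) := by norm_num
    rw [h22, memLp_two_iff_integrable_sq hm]
    simpa [sq, IntegrableOn] using h2
  have key := integral_mul_le_Lp_mul_Lq_of_nonneg hpq
      (f := fun _ => (1:ℝ)) (g := f)
      (Filter.Eventually.of_forall fun _ => zero_le_one)
      (Filter.Eventually.of_forall fun s => hnn s) hf1 hg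
  simp only [one_mul] at key
  have h1 : ∫ _ in Icc x y, (1:ℝ) ^ (2:ℝ) = y - x := by
    simp [Real.volume_Icc, ENNReal.toReal_ofReal (sub_nonneg.mpr hxy), hxy]
  have h2' : (fun s => f s ^ (2:ℝ)) = fun s => f s ^ 2 := by
    funext s
    rw [show ((2:ℝ) = ((2:ℕ):ℝ)) by norm_num, Real.rpow_natCast]
  rw [h1, show (fun s => f s ^ (2:ℝ)) = (fun s => f s ^ 2) from h2'] at key
  have hI : 0 ≤ ∫ s in Icc x y, f s ^ 2 :=
    integral_nonneg fun s => sq_nonneg _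
  calc ∫ s in Icc x y, f s ≤ (y - x) ^ (1/(2:ℝ)) * (∫ s in Icc x y, f s ^ 2) ^ (1/(2:ℝ)) := key
    _ = Real.sqrt ((y - x) * ∫ s in Icc x y, f s ^ 2) := by
        rw [Real.sqrt_eq_rpow, Real.mul_rpow (sub_nonneg.mpr hxy) hI]

lemma sqrt_add_sqrt_le' (u v : ℝ) (hu : 0 ≤ u) (hv : 0 ≤ v) :
    Real.sqrt u + Real.sqrt v ≤ Real.sqrt (2 * (u + v)) := by
  rw [Real.le_sqrt (by positivity) (by positivity)]
  nlinarith [Real.sq_sqrt hu, Real.sq_sqrt hv, sq_nonneg (Real.sqrt u - Real.sqrt v),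
    Real.sqrt_nonneg u, Real.sqrt_nonneg v]

theorem gap_le_sqrt_k (d : ℕ)
    (ψ ψ' : ℝ → EuclideanSpace ℝ (Fin d)) (a b : ℝ) (hab : a ≤ b)
    (hint : IntegrableOn ψ' (Icc a b))
    (hint2 : IntegrableOn (fun s => ‖ψ' s‖ ^ 2) (Icc a b))
    (hftc : ∀ x y, a ≤ x → x ≤ y → y ≤ b → ψ y - ψ x = ∫ s in x..y, ψ' s)
    (B : Set (EuclideanSpace ℝ (Fin d))) (hB : IsCompact B) (hBne : B.Nonempty)
    (α β : ℝ) (hαβ : α ≤ β) (ha : a ≤ α) (hb : β ≤ b) :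
    sInf {r : ℝ | ∃ c ∈ B, r = ‖ψ ((α + β) / 2) - c‖} -
      sInf {r : ℝ | ∃ x ∈ {y : EuclideanSpace ℝ (Fin d) |
          ‖ψ α - y‖ + ‖y - ψ β‖ ≤
            Real.sqrt ((β - α) * ∫ s in Icc α β, ‖ψ' s‖ ^ 2)},
        ∃ c ∈ B, r = ‖x - c‖} ≤
      Real.sqrt ((β - α) * ∫ s in Icc a b, ‖ψ' s‖ ^ 2) := by
  set m := (α + β) / 2 with hm
  have hαm : α ≤ m := by rw [hm]; linarith
  have hmβ : m ≤ β := by rw [hm]; linarith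
  -- increment bound
  have inc : ∀ x y, a ≤ x → x ≤ y → y ≤ b →
      ‖ψ y - ψ x‖ ≤ Real.sqrt ((y - x) * ∫ s in Icc x y, ‖ψ' s‖ ^ 2) := by
    intro x y hax hxy hyb
    have hsub : Icc x y ⊆ Icc a b := Icc_subset_Icc hax hyb
    rw [hftc x y hax hxy hyb]
    calc ‖∫ s in x..y, ψ' s‖ ≤ ∫ s in x..y, ‖ψ' s‖ :=
          intervalIntegral.norm_integral_le_integral_norm hxy
      _ = ∫ s in Icc x y, ‖ψ' s‖ := by
          rw [intervalIntegral.integral_of_le hxy, ← integral_Icc_eq_integral_Ioc]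
      _ ≤ Real.sqrt ((y - x) * ∫ s in Icc x y, ‖ψ' s‖ ^ 2) :=
          cs_interval _ x y hxy (fun s => norm_nonneg _)
            ((hint.mono_set hsub).aestronglyMeasurable.norm)
            (hint2.mono_set hsub)
  -- additivity of ∫ ‖ψ'‖² over adjacent intervals
  have ii : ∀ x y, a ≤ x → x ≤ y → y ≤ b →
      IntervalIntegrable (fun s => ‖ψ' s‖ ^ 2) volume x y := by
    intro x y hax hxy hyb
    apply IntegrableOn.intervalIntegrable
    rw [uIcc_of_le hxy]
    exact hint2.mono_set (Icc_subset_Icc hax hyb)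
  have conv : ∀ x y, x ≤ y → (∫ s in Icc x y, ‖ψ' s‖ ^ 2) = ∫ s in x..y, ‖ψ' s‖ ^ 2 := by
    intro x y hxy
    rw [intervalIntegral.integral_of_le hxy, integral_Icc_eq_integral_Ioc]
  have hadd : (∫ s in Icc α m, ‖ψ' s‖ ^ 2) + (∫ s in Icc m β, ‖ψ' s‖ ^ 2)
      = ∫ s in Icc α β, ‖ψ' s‖ ^ 2 := by
    rw [conv α m hαm, conv m β hmβ, conv α β hαβ]
    exact intervalIntegral.integral_add_adjacent_intervals
      (ii α m ha hαm (le_trans hmβ hb)) (ii m β (le_trans ha hαm) hmβ hb)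
  set A := ∫ s in Icc α m, ‖ψ' s‖ ^ 2 with hA
  set A' := ∫ s in Icc m β, ‖ψ' s‖ ^ 2 with hA'
  have hAnn : 0 ≤ A := integral_nonneg fun s => sq_nonneg _
  have hA'nn : 0 ≤ A' := integral_nonneg fun s => sq_nonneg _
  have hh : m - α = (β - α) / 2 := by rw [hm]; ring
  have hh' : β - m = (β - α) / 2 := by rw [hm]; ring
  -- midpoint is in U_Q
  have hmem : ‖ψ α - ψ m‖ + ‖ψ m - ψ β‖ ≤
      Real.sqrt ((β - α) * ∫ s in Icc α β, ‖ψ' s‖ ^ 2) := by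
    have h1 : ‖ψ α - ψ m‖ ≤ Real.sqrt ((β - α) / 2 * A) := by
      rw [norm_sub_rev, ← hh]
      exact inc α m ha hαm (le_trans hmβ hb)
    have h2 : ‖ψ m - ψ β‖ ≤ Real.sqrt ((β - α) / 2 * A') := by
      rw [norm_sub_rev, ← hh']
      exact inc m β (le_trans ha hαm) hmβ hb
    have h3 : Real.sqrt ((β - α) / 2 * A) + Real.sqrt ((β - α) / 2 * A') ≤
        Real.sqrt (2 * ((β - α) / 2 * A + (β - α) / 2 * A')) :=
      sqrt_add_sqrt_le' _ _ (mul_nonneg (by linarith) hAnn) (mul_nonneg (by linarith) hA'nn)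
    have h4 : 2 * ((β - α) / 2 * A + (β - α) / 2 * A') = (β - α) * (A + A') := by ring
    calc ‖ψ α - ψ m‖ + ‖ψ m - ψ β‖ ≤
        Real.sqrt ((β - α) / 2 * A) + Real.sqrt ((β - α) / 2 * A') := add_le_add h1 h2
      _ ≤ Real.sqrt (2 * ((β - α) / 2 * A + (β - α) / 2 * A')) := h3
      _ = Real.sqrt ((β - α) * ∫ s in Icc α β, ‖ψ' s‖ ^ 2) := by rw [h4, hadd]
  -- conclude via inf comparison
  have hβα : (0:ℝ) ≤ β - α := sub_nonneg.mpr hαβ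
  set u := Real.sqrt ((β - α) * ∫ s in Icc α β, ‖ψ' s‖ ^ 2) with hu
  set R := Real.sqrt ((β - α) * ∫ s in Icc a b, ‖ψ' s‖ ^ 2) with hR
  have huR : u ≤ R := by
    apply Real.sqrt_le_sqrt
    apply mul_le_mul_of_nonneg_left _ hβα
    apply setIntegral_mono_set hint2
      (Filter.Eventually.of_forall fun s => sq_nonneg _)
    exact HasSubset.Subset.eventuallyLE (Icc_subset_Icc ha hb)
  set S1 := {r : ℝ | ∃ x ∈ {y : EuclideanSpace ℝ (Fin d) |
          ‖ψ α - y‖ + ‖y - ψ β‖ ≤ u}, ∃ c ∈ B, r = ‖x - c‖} with hS1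
  set S2 := {r : ℝ | ∃ c ∈ B, r = ‖ψ m - c‖} with hS2
  rw [sub_le_iff_le_add]
  -- for every element r of S1, sInf S2 ≤ r + R
  have hlow : ∀ r ∈ S1, sInf S2 - R ≤ r := by
    rintro r ⟨x, hx, c, hc, rfl⟩
    have hdiam : ‖ψ m - x‖ ≤ u := by
      have e1 : ‖ψ m - x‖ ≤ ‖ψ α - ψ m‖ + ‖ψ α - x‖ := by
        rw [norm_sub_rev (ψ α) (ψ m)]
        calc ‖ψ m - x‖ = ‖(ψ m - ψ α) + (ψ α - x)‖ := by rw [sub_add_sub_cancel]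
          _ ≤ ‖ψ m - ψ α‖ + ‖ψ α - x‖ := norm_add_le _ _
      have e2 : ‖ψ m - x‖ ≤ ‖ψ m - ψ β‖ + ‖x - ψ β‖ := by
        calc ‖ψ m - x‖ = ‖(ψ m - ψ β) - (x - ψ β)‖ := by rw [sub_sub_sub_cancel_right]
          _ ≤ ‖ψ m - ψ β‖ + ‖x - ψ β‖ := norm_sub_le _ _
      have hx' : ‖ψ α - x‖ + ‖x - ψ β‖ ≤ u := hx
      have hψm := hmem
      rw [norm_sub_rev (ψ α) (ψ m)] at hψm
      linarith
    have h5 : ‖ψ m - c‖ ≤ ‖x - c‖ + u := by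
      calc ‖ψ m - c‖ = ‖(ψ m - x) + (x - c)‖ := by rw [sub_add_sub_cancel]
        _ ≤ ‖ψ m - x‖ + ‖x - c‖ := norm_add_le _ _
        _ ≤ u + ‖x - c‖ := by linarith
        _ = ‖x - c‖ + u := by ring
    have h6 : sInf S2 ≤ ‖ψ m - c‖ :=
      csInf_le ⟨0, fun r ⟨c', _, hr⟩ => hr ▸ norm_nonneg _⟩ ⟨c, hc, rfl⟩
    linarith
  have hS1ne : S1.Nonempty := by
    obtain ⟨c, hc⟩ := hBne
    exact ⟨‖ψ m - c‖, ψ m, hmem, c, hc, rfl⟩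
  have := le_csInf hS1ne hlow
  linarith
end
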